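/- Let G be a pattern graph and b a !-vertex of G. Then COPY_b(G), DROP_b(G) and KILL_b(G) are all pattern graphs. If moreover b' is a !-vertex of G with B↑(b)∖b = B↑(b')∖b' and B(b) ∩ B(b') = ∅, then MERGE_{b,b'}(G) is also a pattern graph. -/

import Mathlib

/-- Vertex types: node-vertices, wire-vertices and `!`-vertices. -/
inductive VTy : Type
  | node | wire | bang
  deriving DecidableEq

/-- A directed graph whose vertices are typed by `VTy`. -/
structure TGraph (V E : Type) where
  s : E → V
  t : E → V
  ty : V → VTy

namespace TGraph

variable {V E : Type}

/-- No edge has both a node-vertex source and a node-vertex target. -/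
def NoNodeNode (G : TGraph V E) : Prop :=
  ∀ e, ¬ (G.ty (G.s e) = .node ∧ G.ty (G.t e) = .node)

/-- A `G₂`-typed graph: only node- and wire-vertices, no node-node edges. -/
def IsG2 (G : TGraph V E) : Prop :=
  G.NoNodeNode ∧ ∀ v, G.ty v ≠ .bang

/-- A `G₃`-typed graph: no node-node edges, and every edge into a `!`-vertex
comes from a `!`-vertex. -/
def IsG3 (G : TGraph V E) : Prop :=
  G.NoNodeNode ∧ ∀ e, G.ty (G.t e) = .bang → G.ty (G.s e) = .bang

/-- An input: a wire-vertex all of whose in-edges have `!`-vertex sources.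
In a `G₂`-typed graph this says exactly: a wire-vertex with no in-edges. -/
def IsInput (G : TGraph V E) (v : V) : Prop :=
  G.ty v = .wire ∧ ∀ e, G.t e = v → G.ty (G.s e) = .bang

/-- An output: a wire-vertex with no out-edges. -/
def IsOutput (G : TGraph V E) (v : V) : Prop :=
  G.ty v = .wire ∧ ∀ e, G.s e ≠ v

/-- A string graph: a `G₂`-typed graph where every wire-vertex has at most one
in-edge and at most one out-edge. -/
def IsStringGraph (G : TGraph V E) : Prop :=
  G.IsG2 ∧ ∀ v, G.ty v = .wire →
    (∀ e₁ e₂, G.t e₁ = v → G.t e₂ = v → e₁ = e₂) ∧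
    (∀ e₁ e₂, G.s e₁ = v → G.s e₂ = v → e₁ = e₂)

/-- The set of successors of a vertex. -/
def bsucc (G : TGraph V E) (b : V) : Set V := {v | ∃ e, G.s e = b ∧ G.t e = v}

/-- The set of predecessors of a vertex. -/
def bpred (G : TGraph V E) (b : V) : Set V := {v | ∃ e, G.s e = v ∧ G.t e = b}

/-- The full subgraph on a set of vertices, as a standalone graph. -/
def restrict (G : TGraph V E) (S : Set V) :
    TGraph {v : V // v ∈ S} {e : E // G.s e ∈ S ∧ G.t e ∈ S} where
  s e := ⟨G.s e.1, e.2.1⟩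
  t e := ⟨G.t e.1, e.2.2⟩
  ty v := G.ty v.1

/-- A subgraph of a graph. -/
structure Sub (G : TGraph V E) where
  verts : Set V
  edges : Set E
  s_mem : ∀ e ∈ edges, G.s e ∈ verts
  t_mem : ∀ e ∈ edges, G.t e ∈ verts

namespace Sub

variable {G : TGraph V E}

/-- The whole graph as a subgraph of itself. -/
def top (G : TGraph V E) : Sub G :=
  ⟨Set.univ, Set.univ, fun _ _ => trivial, fun _ _ => trivial⟩

def inter (A B : Sub G) : Sub G :=
  ⟨A.verts ∩ B.verts, A.edges ∩ B.edges,
    fun e he => ⟨A.s_mem e he.1, B.s_mem e he.2⟩,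
    fun e he => ⟨A.t_mem e he.1, B.t_mem e he.2⟩⟩

def union (A B : Sub G) : Sub G :=
  ⟨A.verts ∪ B.verts, A.edges ∪ B.edges,
    fun e he => he.elim (fun h => Or.inl (A.s_mem e h)) (fun h => Or.inr (B.s_mem e h)),
    fun e he => he.elim (fun h => Or.inl (A.t_mem e h)) (fun h => Or.inr (B.t_mem e h))⟩

/-- `H∖A` : the largest subgraph of `H` that is disjoint from `A`
(the full subgraph of `H` on the vertices of `H` not in `A`). -/
def minus (H A : Sub G) : Sub G :=
  ⟨H.verts \ A.verts, {e | e ∈ H.edges ∧ G.s e ∉ A.verts ∧ G.t e ∉ A.verts},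
    fun e he => ⟨H.s_mem e he.1, he.2.1⟩,
    fun e he => ⟨H.t_mem e he.1, he.2.2⟩⟩

/-- An input of a subgraph: a wire-vertex of the subgraph all of whose in-edges
(inside the subgraph) have `!`-vertex sources. -/
def IsInput (A : Sub G) (v : V) : Prop :=
  v ∈ A.verts ∧ G.ty v = .wire ∧ ∀ e ∈ A.edges, G.t e = v → G.ty (G.s e) = .bang

/-- An output of a subgraph: a wire-vertex of the subgraph with no out-edges
inside the subgraph. -/
def IsOutput (A : Sub G) (v : V) : Prop :=
  v ∈ A.verts ∧ G.ty v = .wire ∧ ∀ e ∈ A.edges, G.s e ≠ v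

/-- `A` is open in `H`: `In(H∖A) ⊆ In(H)` and `Out(H∖A) ⊆ Out(H)`. -/
def IsOpenIn (A H : Sub G) : Prop :=
  (∀ v, (H.minus A).IsInput v → H.IsInput v) ∧
  (∀ v, (H.minus A).IsOutput v → H.IsOutput v)

/-- `A` is an open subgraph of `G`. -/
def IsOpen (A : Sub G) : Prop := A.IsOpenIn (top G)

end Sub

/-- The full subgraph on a vertex set, as a subgraph. -/
def fullSub (G : TGraph V E) (S : Set V) : Sub G :=
  ⟨S, {e | G.s e ∈ S ∧ G.t e ∈ S}, fun _ he => he.1, fun _ he => he.2⟩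

/-- `B(b)` : the `!`-box of `b`, i.e. the full subgraph on the successors of `b`. -/
def bbox (G : TGraph V E) (b : V) : Sub G := G.fullSub (G.bsucc b)

/-- Edges of `Σ(G)`, the full subgraph on node- and wire-vertices. -/
def sigmaEdges (G : TGraph V E) : Set E :=
  {e | G.ty (G.s e) ≠ .bang ∧ G.ty (G.t e) ≠ .bang}

/-- Edges of `β(G)`, the full subgraph on `!`-vertices. -/
def betaEdges (G : TGraph V E) : Set E :=
  {e | G.ty (G.s e) = .bang ∧ G.ty (G.t e) = .bang}

/-- `Σ(G)` is a string graph. -/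
def SigmaIsStringGraph (G : TGraph V E) : Prop :=
  G.NoNodeNode ∧ ∀ v, G.ty v = .wire →
    (∀ e₁ e₂, e₁ ∈ G.sigmaEdges → e₂ ∈ G.sigmaEdges → G.t e₁ = v → G.t e₂ = v → e₁ = e₂) ∧
    (∀ e₁ e₂, e₁ ∈ G.sigmaEdges → e₂ ∈ G.sigmaEdges → G.s e₁ = v → G.s e₂ = v → e₁ = e₂)

/-- `β(G)` is posetal: simple and, as a relation on `!`-vertices, a partial order. -/
def BetaPosetal (G : TGraph V E) : Prop :=
  (∀ e₁ e₂, e₁ ∈ G.betaEdges → e₂ ∈ G.betaEdges →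
    G.s e₁ = G.s e₂ → G.t e₁ = G.t e₂ → e₁ = e₂) ∧
  (∀ b, G.ty b = .bang → b ∈ G.bsucc b) ∧
  (∀ b b', G.ty b = .bang → G.ty b' = .bang →
    b' ∈ G.bsucc b → b ∈ G.bsucc b' → b = b') ∧
  (∀ a b c, G.ty a = .bang → G.ty b = .bang → G.ty c = .bang →
    b ∈ G.bsucc a → c ∈ G.bsucc b → c ∈ G.bsucc a)

/-- A pattern graph. -/
def IsPattern (G : TGraph V E) : Prop :=
  G.IsG3 ∧ G.SigmaIsStringGraph ∧ G.BetaPosetal ∧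
  (∀ b, G.ty b = .bang → (G.bbox b).IsOpen) ∧
  (∀ b b', G.ty b = .bang → G.ty b' = .bang → b' ∈ G.bsucc b →
    G.bsucc b' ⊆ G.bsucc b)

end TGraph

namespace TGraph

variable {V E : Type}

open Classical in
/-- The canonical map into the vertex set of `COPY_b(G)`: vertices of `B(b)`
go to the second copy, all other vertices to the (shared) first copy. -/
noncomputable def embed (G : TGraph V E) (b v : V) : V ⊕ {w : V // w ∈ G.bsucc b} :=
  if h : v ∈ G.bsucc b then Sum.inr ⟨v, h⟩ else Sum.inl v

theorem embed_of_mem (G : TGraph V E) {b v : V} (h : v ∈ G.bsucc b) :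
    G.embed b v = Sum.inr ⟨v, h⟩ := by
  simp [embed, h]

theorem embed_of_not_mem (G : TGraph V E) {b v : V} (h : v ∉ G.bsucc b) :
    G.embed b v = Sum.inl v := by
  simp [embed, h]

/-- `COPY_b(G)` : the pushout of the inclusion `G∖B(b) ↪ G` along itself,
computed concretely: two copies of `G` glued along `G∖B(b)`. -/
noncomputable def copyGraph (G : TGraph V E) (b : V) :
    TGraph (V ⊕ {w : V // w ∈ G.bsucc b})
      (E ⊕ {e : E // G.s e ∈ G.bsucc b ∨ G.t e ∈ G.bsucc b}) where
  s := Sum.elim (fun e => Sum.inl (G.s e)) (fun e => G.embed b (G.s e.1))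
  t := Sum.elim (fun e => Sum.inl (G.t e)) (fun e => G.embed b (G.t e.1))
  ty := Sum.elim G.ty fun v => G.ty v.1

/-- `DROP_b(G) = G∖{b}`. -/
def dropGraph (G : TGraph V E) (b : V) :=
  G.restrict {v : V | v ≠ b}

/-- `KILL_b(G) = G∖B(b)`. -/
def killGraph (G : TGraph V E) (b : V) :=
  G.restrict {v : V | v ∉ G.bsucc b}

end TGraph

namespace TGraph

variable {V E : Type}

/-- The vertex identification performed by `MERGE_{b,b'}`: `b` and `b'` are
identified. -/
def mergeVRel (b b' : V) (v₁ v₂ : V) : Prop :=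
  v₁ = v₂ ∨ (v₁ = b ∧ v₂ = b') ∨ (v₁ = b' ∧ v₂ = b)

/-- The edges of `B↑(b)`, the full subgraph on the predecessors of `b`. -/
def upEdges (G : TGraph V E) (b : V) : Set E :=
  {e | G.s e ∈ G.bpred b ∧ G.t e ∈ G.bpred b}

/-- The edge identification performed by `MERGE_{b,b'}`: an edge of `B↑(b)` is
identified with the corresponding edge of `B↑(b')`. -/
def mergeERel (G : TGraph V E) (b b' : V) (e₁ e₂ : E) : Prop :=
  e₁ = e₂ ∨
    (e₁ ∈ G.upEdges b ∧ e₂ ∈ G.upEdges b' ∧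
      Quot.mk (mergeVRel b b') (G.s e₁) = Quot.mk (mergeVRel b b') (G.s e₂) ∧
      Quot.mk (mergeVRel b b') (G.t e₁) = Quot.mk (mergeVRel b b') (G.t e₂)) ∨
    (e₁ ∈ G.upEdges b' ∧ e₂ ∈ G.upEdges b ∧
      Quot.mk (mergeVRel b b') (G.s e₁) = Quot.mk (mergeVRel b b') (G.s e₂) ∧
      Quot.mk (mergeVRel b b') (G.t e₁) = Quot.mk (mergeVRel b b') (G.t e₂))

open Classical in
/-- `MERGE_{b,b'}(G)` : the coequaliser of the inclusion `B↑(b) ↪ G` and the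
composite of the canonical isomorphism `B↑(b) ≅ B↑(b')` with `B↑(b') ↪ G`,
computed concretely as a quotient of `G`. -/
noncomputable def mergeGraph (G : TGraph V E) (b b' : V) :
    TGraph (Quot (mergeVRel b b')) (Quot (G.mergeERel b b')) where
  s := Quot.lift (fun e => Quot.mk _ (G.s e)) (by
    intro e₁ e₂ h
    rcases h with h | h | h
    · rw [h]
    · exact h.2.2.1
    · exact h.2.2.1)
  t := Quot.lift (fun e => Quot.mk _ (G.t e)) (by
    intro e₁ e₂ h
    rcases h with h | h | h
    · rw [h]
    · exact h.2.2.2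
    · exact h.2.2.2)
  ty := Quot.lift (fun v => if v = b' then G.ty b else G.ty v) (by
    intro v₁ v₂ h
    rcases h with h | ⟨h1, h2⟩ | ⟨h1, h2⟩
    · rw [h]
    · subst h1; subst h2; simp
    · subst h1; subst h2; simp)

open Classical in
theorem mergeGraph_ty_mk (G : TGraph V E) (b b' v : V) :
    (G.mergeGraph b b').ty (Quot.mk _ v) = if v = b' then G.ty b else G.ty v := rfl

end TGraph


namespace TGraph

variable {V E : Type} {G : TGraph V E}

lemma pat_key_in (hG : G.IsPattern) {c : V} (hc : G.ty c = .bang) {v : V}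
    (hv : G.ty v = .wire) (hvc : v ∉ G.bsucc c)
    (H : ∀ e, G.t e = v → G.s e ∉ G.bsucc c → G.ty (G.s e) = .bang) :
    ∀ e, G.t e = v → G.ty (G.s e) = .bang := by
  have hop := (hG.2.2.2.1 c hc).1 v
    ⟨⟨trivial, hvc⟩, hv, fun e he ht => H e ht he.2.1⟩
  exact fun e ht => hop.2.2 e trivial ht

lemma pat_key_out (hG : G.IsPattern) {c : V} (hc : G.ty c = .bang) {v : V}
    (hv : G.ty v = .wire) (hvc : v ∉ G.bsucc c)
    (H : ∀ e, G.s e = v → G.t e ∉ G.bsucc c → False) :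
    ∀ e, G.s e ≠ v := by
  have hop := (hG.2.2.2.1 c hc).2 v
    ⟨⟨trivial, hvc⟩, hv, fun e he hs => H e hs he.2.2⟩
  exact fun e => hop.2.2 e trivial

lemma pat_L1 (hG : G.IsPattern) {c : V} (hc : G.ty c = .bang) {v : V}
    (hv : G.ty v = .wire) (hvc : v ∉ G.bsucc c) {e : E}
    (ht : G.t e = v) (hs : G.s e ∈ G.bsucc c) (hns : G.ty (G.s e) ≠ .bang) :
    False := by
  have H : ∀ e', G.t e' = v → G.s e' ∉ G.bsucc c → G.ty (G.s e') = .bang := by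
    intro e' ht' hs'
    by_contra hns'
    have he : e ∈ G.sigmaEdges := ⟨hns, by rw [ht, hv]; exact fun h => VTy.noConfusion h⟩
    have he' : e' ∈ G.sigmaEdges := ⟨hns', by rw [ht', hv]; exact fun h => VTy.noConfusion h⟩
    have := (hG.2.1.2 v hv).1 e e' he he' ht ht'
    exact hs' (this ▸ hs)
  exact hns (pat_key_in hG hc hv hvc H e ht)

lemma pat_L2 (hG : G.IsPattern) {c : V} (hc : G.ty c = .bang) {v : V}
    (hv : G.ty v = .wire) (hvc : v ∉ G.bsucc c) {e : E}
    (hs : G.s e = v) (htm : G.t e ∈ G.bsucc c) : False := by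
  have hnt : G.ty (G.t e) ≠ .bang := by
    intro h
    have := hG.1.2 e h
    rw [hs, hv] at this; exact VTy.noConfusion this
  have H : ∀ e', G.s e' = v → G.t e' ∉ G.bsucc c → False := by
    intro e' hs' ht'
    have hnt' : G.ty (G.t e') ≠ .bang := by
      intro h
      have := hG.1.2 e' h
      rw [hs', hv] at this; exact VTy.noConfusion this
    have he : e ∈ G.sigmaEdges := ⟨by rw [hs, hv]; exact fun h => VTy.noConfusion h, hnt⟩
    have he' : e' ∈ G.sigmaEdges := ⟨by rw [hs', hv]; exact fun h => VTy.noConfusion h, hnt'⟩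
    have := (hG.2.1.2 v hv).2 e e' he he' hs hs'
    exact ht' (this ▸ htm)
  exact pat_key_out hG hc hv hvc H e hs

lemma bsucc_restrict {S : Set V} {c : V} (hc : c ∈ S) {w : V} (hw : w ∈ S) :
    (⟨w, hw⟩ : {v // v ∈ S}) ∈ (G.restrict S).bsucc ⟨c, hc⟩ ↔ w ∈ G.bsucc c := by
  constructor
  · rintro ⟨e, hs, ht⟩
    exact ⟨e.1, congrArg Subtype.val hs, congrArg Subtype.val ht⟩
  · rintro ⟨e, hs, ht⟩
    exact ⟨⟨e, by rw [hs]; exact hc, by rw [ht]; exact hw⟩, Subtype.ext hs, Subtype.ext ht⟩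

end TGraph

namespace TGraph

variable {V E : Type} {G : TGraph V E}

lemma restrict_isPattern (hG : G.IsPattern) (S : Set V)
    (Hin : ∀ c, c ∈ S → G.ty c = .bang → ∀ v, v ∈ S → G.ty v = .wire → v ∉ G.bsucc c →
      (∀ e, G.s e ∈ S → G.t e ∈ S → G.t e = v → G.s e ∉ G.bsucc c → G.ty (G.s e) = .bang) →
      ∀ e, G.s e ∈ S → G.t e = v → G.ty (G.s e) = .bang)
    (Hout : ∀ c, c ∈ S → G.ty c = .bang → ∀ v, v ∈ S → G.ty v = .wire → v ∉ G.bsucc c →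
      (∀ e, G.s e ∈ S → G.t e ∈ S → G.s e = v → G.t e ∉ G.bsucc c → False) →
      ∀ e, G.s e ∈ S → G.t e ∈ S → G.s e ≠ v) :
    (G.restrict S).IsPattern := by
  obtain ⟨⟨hNN, hG3⟩, ⟨-, hSig⟩, ⟨hBsimp, hBrefl, hBanti, hBtrans⟩, hOpen, hNest⟩ := hG
  refine ⟨⟨fun e h => hNN e.1 h, fun e h => hG3 e.1 h⟩, ?_, ?_, ?_, ?_⟩
  · refine ⟨fun e h => hNN e.1 h, ?_⟩
    rintro ⟨v, hvS⟩ hv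
    constructor
    · intro e₁ e₂ h₁ h₂ ht₁ ht₂
      exact Subtype.ext ((hSig v hv).1 e₁.1 e₂.1 h₁ h₂
        (congrArg Subtype.val ht₁) (congrArg Subtype.val ht₂))
    · intro e₁ e₂ h₁ h₂ hs₁ hs₂
      exact Subtype.ext ((hSig v hv).2 e₁.1 e₂.1 h₁ h₂
        (congrArg Subtype.val hs₁) (congrArg Subtype.val hs₂))
  · refine ⟨?_, ?_, ?_, ?_⟩
    · intro e₁ e₂ h₁ h₂ hs ht
      exact Subtype.ext (hBsimp e₁.1 e₂.1 h₁ h₂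
        (congrArg Subtype.val hs) (congrArg Subtype.val ht))
    · rintro ⟨c, hcS⟩ hc
      exact (bsucc_restrict hcS hcS).mpr (hBrefl c hc)
    · rintro ⟨c, hcS⟩ ⟨d, hdS⟩ hc hd h1 h2
      exact Subtype.ext (hBanti c d hc hd ((bsucc_restrict hcS hdS).mp h1)
        ((bsucc_restrict hdS hcS).mp h2))
    · rintro ⟨a, haS⟩ ⟨c, hcS⟩ ⟨d, hdS⟩ ha hc hd h1 h2
      exact (bsucc_restrict haS hdS).mpr (hBtrans a c d ha hc hd
        ((bsucc_restrict haS hcS).mp h1) ((bsucc_restrict hcS hdS).mp h2))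
  · rintro ⟨c, hcS⟩ hc
    constructor
    · rintro ⟨v, hvS⟩ ⟨⟨-, hvbox⟩, hv, hmin⟩
      have hvc : v ∉ G.bsucc c := fun h => hvbox ((bsucc_restrict hcS hvS).mpr h)
      refine ⟨trivial, hv, ?_⟩
      rintro ⟨e, hsS, htS⟩ - hte
      refine Hin c hcS hc v hvS hv hvc ?_ e hsS (congrArg Subtype.val hte)
      intro e' hsS' htS' ht' hs'
      refine hmin ⟨e', hsS', htS'⟩ ⟨trivial, ?_, ?_⟩ (Subtype.ext ht')
      · exact fun hmem => hs' ((bsucc_restrict hcS hsS').mp hmem)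
      · exact fun hmem => hvc (ht' ▸ (bsucc_restrict hcS htS').mp hmem)
    · rintro ⟨v, hvS⟩ ⟨⟨-, hvbox⟩, hv, hmin⟩
      have hvc : v ∉ G.bsucc c := fun h => hvbox ((bsucc_restrict hcS hvS).mpr h)
      refine ⟨trivial, hv, ?_⟩
      rintro ⟨e, hsS, htS⟩ - hse
      refine Hout c hcS hc v hvS hv hvc ?_ e hsS htS (congrArg Subtype.val hse)
      intro e' hsS' htS' hs' ht'
      refine hmin ⟨e', hsS', htS'⟩ ⟨trivial, ?_, ?_⟩ (Subtype.ext hs')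
      · exact fun hmem => hvc (hs' ▸ (bsucc_restrict hcS hsS').mp hmem)
      · exact fun hmem => ht' ((bsucc_restrict hcS htS').mp hmem)
  · rintro ⟨c, hcS⟩ ⟨d, hdS⟩ hc hd hmem ⟨w, hwS⟩ hw
    exact (bsucc_restrict hcS hwS).mpr (hNest c d hc hd
      ((bsucc_restrict hcS hdS).mp hmem) ((bsucc_restrict hdS hwS).mp hw))

end TGraph

namespace TGraph

variable {V E : Type} {G : TGraph V E}

lemma drop_isPattern (hG : G.IsPattern) {b : V} (hb : G.ty b = .bang) :
    (G.dropGraph b).IsPattern := by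
  refine restrict_isPattern hG _ ?_ ?_
  · intro c hcS hc v hvS hv hvc Hyp e hsS ht
    refine pat_key_in hG hc hv hvc ?_ e ht
    intro e' ht' hs'
    by_cases hb' : G.s e' = b
    · rw [hb']; exact hb
    · exact Hyp e' hb' (fun h => hvS (ht' ▸ h)) ht' hs'
  · intro c hcS hc v hvS hv hvc Hyp e hsS htS hse
    refine pat_key_out hG hc hv hvc ?_ e hse
    intro e' hs' ht'
    by_cases hb' : G.t e' = b
    · have : G.ty (G.s e') = .bang := hG.1.2 e' (hb' ▸ hb)
      rw [hs', hv] at this; exact VTy.noConfusion this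
    · exact Hyp e' (fun h => hvS (hs' ▸ h)) hb' hs' ht'

lemma kill_isPattern (hG : G.IsPattern) {b : V} (hb : G.ty b = .bang) :
    (G.killGraph b).IsPattern := by
  refine restrict_isPattern hG _ ?_ ?_
  · intro c hcS hc v hvS hv hvc Hyp e hsS ht
    by_contra hns
    by_cases hsc : G.s e ∈ G.bsucc c
    · exact pat_L1 hG hc hv hvc ht hsc hns
    · exact hns (Hyp e hsS (fun h => hvS (ht ▸ h)) ht hsc)
  · intro c hcS hc v hvS hv hvc Hyp e hsS htS hse
    by_cases htc : G.t e ∈ G.bsucc c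
    · exact (pat_L2 hG hc hv hvc hse htc).elim
    · exact Hyp e hsS htS hse htc

end TGraph

namespace TGraph

variable {V E : Type} {G : TGraph V E} {b : V}

@[simp] lemma copy_s_inl (e : E) :
    (G.copyGraph b).s (Sum.inl e) = Sum.inl (G.s e) := rfl
@[simp] lemma copy_s_inr (f : {e : E // G.s e ∈ G.bsucc b ∨ G.t e ∈ G.bsucc b}) :
    (G.copyGraph b).s (Sum.inr f) = G.embed b (G.s f.1) := rfl
@[simp] lemma copy_t_inl (e : E) :
    (G.copyGraph b).t (Sum.inl e) = Sum.inl (G.t e) := rfl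
@[simp] lemma copy_t_inr (f : {e : E // G.s e ∈ G.bsucc b ∨ G.t e ∈ G.bsucc b}) :
    (G.copyGraph b).t (Sum.inr f) = G.embed b (G.t f.1) := rfl
@[simp] lemma copy_ty_inl (v : V) : (G.copyGraph b).ty (Sum.inl v) = G.ty v := rfl
@[simp] lemma copy_ty_inr (u : {w : V // w ∈ G.bsucc b}) :
    (G.copyGraph b).ty (Sum.inr u) = G.ty u.1 := rfl

lemma copy_ty_embed (v : V) : (G.copyGraph b).ty (G.embed b v) = G.ty v := by
  by_cases h : v ∈ G.bsucc b
  · rw [G.embed_of_mem h]; rfl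
  · rw [G.embed_of_not_mem h]; rfl

lemma embed_inj {v w : V} (h : G.embed b v = G.embed b w) : v = w := by
  by_cases hv : v ∈ G.bsucc b <;> by_cases hw : w ∈ G.bsucc b
  · rw [G.embed_of_mem hv, G.embed_of_mem hw] at h
    exact congrArg Subtype.val (Sum.inr.inj h)
  · rw [G.embed_of_mem hv, G.embed_of_not_mem hw] at h; exact (Sum.inr_ne_inl h).elim
  · rw [G.embed_of_not_mem hv, G.embed_of_mem hw] at h; exact (Sum.inl_ne_inr h).elim
  · rw [G.embed_of_not_mem hv, G.embed_of_not_mem hw] at h; exact Sum.inl.inj h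

lemma embed_inl_inv {v v' : V} (h : G.embed b v = Sum.inl v') :
    v = v' ∧ v ∉ G.bsucc b := by
  by_cases hv : v ∈ G.bsucc b
  · rw [G.embed_of_mem hv] at h; exact (Sum.inr_ne_inl h).elim
  · rw [G.embed_of_not_mem hv] at h; exact ⟨Sum.inl.inj h, hv⟩

lemma embed_inr_inv {v : V} {u : {w : V // w ∈ G.bsucc b}}
    (h : G.embed b v = Sum.inr u) : v = u.1 := by
  by_cases hv : v ∈ G.bsucc b
  · rw [G.embed_of_mem hv] at h; exact congrArg Subtype.val (Sum.inr.inj h)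
  · rw [G.embed_of_not_mem hv] at h; exact (Sum.inl_ne_inr h).elim

lemma csucc_ll {a v : V} :
    Sum.inl v ∈ (G.copyGraph b).bsucc (Sum.inl a) ↔ v ∈ G.bsucc a := by
  constructor
  · rintro ⟨(e | f), hs, ht⟩
    · exact ⟨e, Sum.inl.inj hs, Sum.inl.inj ht⟩
    · exact ⟨f.1, (embed_inl_inv hs).1, (embed_inl_inv ht).1⟩
  · rintro ⟨e, hs, ht⟩
    exact ⟨Sum.inl e, congrArg Sum.inl hs, congrArg Sum.inl ht⟩

lemma csucc_lr {a : V} {u : {w : V // w ∈ G.bsucc b}} :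
    Sum.inr u ∈ (G.copyGraph b).bsucc (Sum.inl a) ↔
      a ∉ G.bsucc b ∧ u.1 ∈ G.bsucc a := by
  constructor
  · rintro ⟨(e | f), hs, ht⟩
    · exact (Sum.inl_ne_inr ht).elim
    · obtain ⟨h1, h2⟩ := embed_inl_inv hs
      exact ⟨h1 ▸ h2, ⟨f.1, h1, embed_inr_inv ht⟩⟩
  · rintro ⟨hab, e, hs, ht⟩
    refine ⟨Sum.inr ⟨e, Or.inr (by rw [ht]; exact u.2)⟩, ?_, ?_⟩
    · show G.embed b (G.s e) = Sum.inl a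
      rw [hs]; exact G.embed_of_not_mem hab
    · show G.embed b (G.t e) = Sum.inr u
      rw [ht]; exact G.embed_of_mem u.2

lemma csucc_rl {w : {w : V // w ∈ G.bsucc b}} {v : V} :
    Sum.inl v ∈ (G.copyGraph b).bsucc (Sum.inr w) ↔
      v ∈ G.bsucc w.1 ∧ v ∉ G.bsucc b := by
  constructor
  · rintro ⟨(e | f), hs, ht⟩
    · exact (Sum.inl_ne_inr hs).elim
    · have h1 : G.s f.1 = w.1 := embed_inr_inv hs
      obtain ⟨h2, h3⟩ := embed_inl_inv ht
      exact ⟨⟨f.1, h1, h2⟩, h2 ▸ h3⟩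
  · rintro ⟨⟨e, hs, ht⟩, hvb⟩
    refine ⟨Sum.inr ⟨e, Or.inl (by rw [hs]; exact w.2)⟩, ?_, ?_⟩
    · show G.embed b (G.s e) = Sum.inr w
      rw [hs]; exact G.embed_of_mem w.2
    · show G.embed b (G.t e) = Sum.inl v
      rw [ht]; exact G.embed_of_not_mem hvb

lemma csucc_rr {w u : {w : V // w ∈ G.bsucc b}} :
    Sum.inr u ∈ (G.copyGraph b).bsucc (Sum.inr w) ↔ u.1 ∈ G.bsucc w.1 := by
  constructor
  · rintro ⟨(e | f), hs, ht⟩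
    · exact (Sum.inl_ne_inr hs).elim
    · exact ⟨f.1, embed_inr_inv hs, embed_inr_inv ht⟩
  · rintro ⟨e, hs, ht⟩
    refine ⟨Sum.inr ⟨e, Or.inl (by rw [hs]; exact w.2)⟩, ?_, ?_⟩
    · show G.embed b (G.s e) = Sum.inr w
      rw [hs]; exact G.embed_of_mem w.2
    · show G.embed b (G.t e) = Sum.inr u
      rw [ht]; exact G.embed_of_mem u.2

lemma embed_csucc_inl {a z : V}
    (h : G.embed b z ∈ (G.copyGraph b).bsucc (Sum.inl a)) : z ∈ G.bsucc a := by
  by_cases hz : z ∈ G.bsucc b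
  · rw [G.embed_of_mem hz] at h; exact (csucc_lr.mp h).2
  · rw [G.embed_of_not_mem hz] at h; exact csucc_ll.mp h

lemma embed_csucc_inr {w : {w : V // w ∈ G.bsucc b}} {z : V}
    (h : G.embed b z ∈ (G.copyGraph b).bsucc (Sum.inr w)) : z ∈ G.bsucc w.1 := by
  by_cases hz : z ∈ G.bsucc b
  · rw [G.embed_of_mem hz] at h; exact csucc_rr.mp h
  · rw [G.embed_of_not_mem hz] at h; exact (csucc_rl.mp h).1

end TGraph

namespace TGraph

variable {V E : Type} {G : TGraph V E}

theorem copy_isPattern (hG : G.IsPattern) {b : V} (hb : G.ty b = .bang) :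
    (G.copyGraph b).IsPattern := by
  obtain ⟨⟨hNN, hG3⟩, ⟨-, hSig⟩, ⟨hBsimp, hBrefl, hBanti, hBtrans⟩, hOpen, hNest⟩ := id hG
  refine ⟨⟨?_, ?_⟩, ⟨?_, ?_⟩, ⟨?_, ?_, ?_, ?_⟩, ?_, ?_⟩
  · rintro (e | f) h
    · exact hNN e h
    · simp only [copy_s_inr, copy_t_inr, copy_ty_embed] at h
      exact hNN f.1 h
  · rintro (e | f) h
    · exact hG3 e h
    · simp only [copy_s_inr, copy_t_inr, copy_ty_embed] at h ⊢
      exact hG3 f.1 h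
  · rintro (e | f) h
    · exact hNN e h
    · simp only [copy_s_inr, copy_t_inr, copy_ty_embed] at h
      exact hNN f.1 h
  · rintro (v | u) hv
    · have hv' : G.ty v = .wire := hv
      constructor
      · intro e₁ e₂ h₁ h₂ ht₁ ht₂
        have key : ∀ (f : {e : E // G.s e ∈ G.bsucc b ∨ G.t e ∈ G.bsucc b}),
            Sum.inr f ∈ (G.copyGraph b).sigmaEdges →
            (G.copyGraph b).t (Sum.inr f) = Sum.inl v → False := by
          intro f hf htf
          simp only [copy_t_inr] at htf
          obtain ⟨htv, hvb⟩ := embed_inl_inv htf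
          have hsf : G.s f.1 ∈ G.bsucc b := f.2.resolve_right (fun h => hvb (htv ▸ h))
          obtain ⟨hf1, -⟩ := hf
          simp only [copy_s_inr, copy_ty_embed] at hf1
          exact pat_L1 hG hb hv' (htv ▸ hvb) htv hsf hf1
        rcases e₁ with e₁ | f₁
        · rcases e₂ with e₂ | f₂
          · exact congrArg Sum.inl
              ((hSig v hv').1 e₁ e₂ h₁ h₂ (Sum.inl.inj ht₁) (Sum.inl.inj ht₂))
          · exact (key f₂ h₂ ht₂).elim
        · exact (key f₁ h₁ ht₁).elim
      · intro e₁ e₂ h₁ h₂ hs₁ hs₂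
        have key : ∀ (f : {e : E // G.s e ∈ G.bsucc b ∨ G.t e ∈ G.bsucc b}),
            Sum.inr f ∈ (G.copyGraph b).sigmaEdges →
            (G.copyGraph b).s (Sum.inr f) = Sum.inl v → False := by
          intro f hf hsf
          simp only [copy_s_inr] at hsf
          obtain ⟨hsv, hvb⟩ := embed_inl_inv hsf
          have htf : G.t f.1 ∈ G.bsucc b := f.2.resolve_left (fun h => hvb (hsv ▸ h))
          exact pat_L2 hG hb hv' (hsv ▸ hvb) hsv htf
        rcases e₁ with e₁ | f₁
        · rcases e₂ with e₂ | f₂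
          · exact congrArg Sum.inl
              ((hSig v hv').2 e₁ e₂ h₁ h₂ (Sum.inl.inj hs₁) (Sum.inl.inj hs₂))
          · exact (key f₂ h₂ hs₂).elim
        · exact (key f₁ h₁ hs₁).elim
    · have hu : G.ty u.1 = .wire := hv
      constructor
      · rintro (e₁ | f₁) (e₂ | f₂) h₁ h₂ ht₁ ht₂
        · exact (Sum.inl_ne_inr ht₁).elim
        · exact (Sum.inl_ne_inr ht₁).elim
        · exact (Sum.inl_ne_inr ht₂).elim
        · simp only [copy_t_inr] at ht₁ ht₂
          simp only [sigmaEdges, Set.mem_setOf_eq, copy_s_inr, copy_t_inr,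
            copy_ty_embed] at h₁ h₂
          exact congrArg Sum.inr (Subtype.ext
            ((hSig u.1 hu).1 f₁.1 f₂.1 h₁ h₂ (embed_inr_inv ht₁) (embed_inr_inv ht₂)))
      · rintro (e₁ | f₁) (e₂ | f₂) h₁ h₂ hs₁ hs₂
        · exact (Sum.inl_ne_inr hs₁).elim
        · exact (Sum.inl_ne_inr hs₁).elim
        · exact (Sum.inl_ne_inr hs₂).elim
        · simp only [copy_s_inr] at hs₁ hs₂
          simp only [sigmaEdges, Set.mem_setOf_eq, copy_s_inr, copy_t_inr,
            copy_ty_embed] at h₁ h₂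
          exact congrArg Sum.inr (Subtype.ext
            ((hSig u.1 hu).2 f₁.1 f₂.1 h₁ h₂ (embed_inr_inv hs₁) (embed_inr_inv hs₂)))
  · rintro (e₁ | f₁) (e₂ | f₂) h₁ h₂ hs ht
    · exact congrArg Sum.inl (hBsimp e₁ e₂ h₁ h₂ (Sum.inl.inj hs) (Sum.inl.inj ht))
    · simp only [copy_s_inl, copy_s_inr, copy_t_inl, copy_t_inr] at hs ht
      obtain ⟨-, hs2⟩ := embed_inl_inv hs.symm
      obtain ⟨-, ht2⟩ := embed_inl_inv ht.symm
      exact (f₂.2.elim hs2 ht2).elim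
    · simp only [copy_s_inl, copy_s_inr, copy_t_inl, copy_t_inr] at hs ht
      obtain ⟨-, hs2⟩ := embed_inl_inv hs
      obtain ⟨-, ht2⟩ := embed_inl_inv ht
      exact (f₁.2.elim hs2 ht2).elim
    · simp only [copy_s_inr, copy_t_inr] at hs ht
      simp only [betaEdges, Set.mem_setOf_eq, copy_s_inr, copy_t_inr,
        copy_ty_embed] at h₁ h₂
      exact congrArg Sum.inr (Subtype.ext
        (hBsimp f₁.1 f₂.1 h₁ h₂ (embed_inj hs) (embed_inj ht)))
  · rintro (a | u) ha
    · exact csucc_ll.mpr (hBrefl a ha)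
    · exact csucc_rr.mpr (hBrefl u.1 ha)
  · rintro (a | u) (c | w) ha hc h1 h2
    · exact congrArg Sum.inl (hBanti a c ha hc (csucc_ll.mp h1) (csucc_ll.mp h2))
    · obtain ⟨hab, hwa⟩ := csucc_lr.mp h1
      obtain ⟨haw, -⟩ := csucc_rl.mp h2
      exact absurd w.2 ((hBanti a w.1 ha hc hwa haw) ▸ hab)
    · obtain ⟨hcu, hcb⟩ := csucc_rl.mp h1
      obtain ⟨hcb', huc⟩ := csucc_lr.mp h2
      exact absurd ((hBanti u.1 c ha hc hcu huc) ▸ u.2) hcb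
    · exact congrArg Sum.inr (Subtype.ext
        (hBanti u.1 w.1 ha hc (csucc_rr.mp h1) (csucc_rr.mp h2)))
  · rintro (a | u) (c | w) (d | x) ha hc hd h1 h2
    · exact csucc_ll.mpr (hBtrans a c d ha hc hd (csucc_ll.mp h1) (csucc_ll.mp h2))
    · refine csucc_lr.mpr ⟨?_, hBtrans a c x.1 ha hc hd (csucc_ll.mp h1) (csucc_lr.mp h2).2⟩
      intro hab
      exact (csucc_lr.mp h2).1 (hNest b a hb ha hab (csucc_ll.mp h1))
    · exact csucc_ll.mpr (hBtrans a w.1 d ha hc hd (csucc_lr.mp h1).2 (csucc_rl.mp h2).1)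
    · exact csucc_lr.mpr ⟨(csucc_lr.mp h1).1,
        hBtrans a w.1 x.1 ha hc hd (csucc_lr.mp h1).2 (csucc_rr.mp h2)⟩
    · exact absurd (hNest b u.1 hb ha u.2 (csucc_rl.mp h1).1) (csucc_rl.mp h1).2
    · exact absurd (hNest b u.1 hb ha u.2 (csucc_rl.mp h1).1) (csucc_rl.mp h1).2
    · exact absurd (hNest b w.1 hb hc w.2 (csucc_rl.mp h2).1) (csucc_rl.mp h2).2
    · exact csucc_rr.mpr (hBtrans u.1 w.1 x.1 ha hc hd (csucc_rr.mp h1) (csucc_rr.mp h2))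
  · rintro (a | w) hxty
    · have ha : G.ty a = .bang := hxty
      constructor
      · rintro (v | u) ⟨⟨-, hnb⟩, hv, hmin⟩
        · have hv' : G.ty v = .wire := hv
          have hva : v ∉ G.bsucc a := fun h => hnb (csucc_ll.mpr h)
          have hall : ∀ e, G.t e = v → G.ty (G.s e) = .bang := by
            refine pat_key_in hG ha hv' hva ?_
            intro e ht hs
            exact hmin (Sum.inl e) ⟨trivial, fun h => hs (csucc_ll.mp h),
              fun h => hva (ht ▸ csucc_ll.mp h)⟩ (congrArg Sum.inl ht)
          refine ⟨trivial, hv, ?_⟩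
          rintro (e | f) - hte
          · exact hall e (Sum.inl.inj hte)
          · simp only [copy_t_inr] at hte
            simp only [copy_s_inr, copy_ty_embed]
            exact hall f.1 (embed_inl_inv hte).1
        · by_cases hab : a ∈ G.bsucc b
          · have havoid : ∀ z, G.embed b z ∉ (G.copyGraph b).bsucc (Sum.inl a) := by
              intro z hmem
              by_cases hz : z ∈ G.bsucc b
              · rw [G.embed_of_mem hz] at hmem
                exact (csucc_lr.mp hmem).1 hab
              · rw [G.embed_of_not_mem hz] at hmem
                exact hz (hNest b a hb ha hab (csucc_ll.mp hmem))
            refine ⟨trivial, hv, ?_⟩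
            rintro (e | f) - hte
            · exact (Sum.inl_ne_inr hte).elim
            · exact hmin (Sum.inr f) ⟨trivial, havoid _, havoid _⟩ hte
          · have hu : G.ty u.1 = .wire := hv
            have hua : u.1 ∉ G.bsucc a := fun h => hnb (csucc_lr.mpr ⟨hab, h⟩)
            have hall : ∀ e, G.t e = u.1 → G.ty (G.s e) = .bang := by
              refine pat_key_in hG ha hu hua ?_
              intro e ht hs
              have hres := hmin (Sum.inr ⟨e, Or.inr (by rw [ht]; exact u.2)⟩)
                ⟨trivial, fun h => hs (embed_csucc_inl h),
                  fun h => hua (ht ▸ embed_csucc_inl h)⟩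
                (by show G.embed b (G.t e) = Sum.inr u; rw [ht]; exact G.embed_of_mem u.2)
              simpa only [copy_s_inr, copy_ty_embed] using hres
            refine ⟨trivial, hv, ?_⟩
            rintro (e | f) - hte
            · exact (Sum.inl_ne_inr hte).elim
            · simp only [copy_t_inr] at hte
              simp only [copy_s_inr, copy_ty_embed]
              exact hall f.1 (embed_inr_inv hte)
      · rintro (v | u) ⟨⟨-, hnb⟩, hv, hmin⟩
        · have hv' : G.ty v = .wire := hv
          have hva : v ∉ G.bsucc a := fun h => hnb (csucc_ll.mpr h)
          have hnone : ∀ e, G.s e ≠ v := by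
            refine pat_key_out hG ha hv' hva ?_
            intro e hs ht
            exact hmin (Sum.inl e) ⟨trivial, fun h => hva (hs ▸ csucc_ll.mp h),
              fun h => ht (csucc_ll.mp h)⟩ (congrArg Sum.inl hs)
          refine ⟨trivial, hv, ?_⟩
          rintro (e | f) - hse
          · exact hnone e (Sum.inl.inj hse)
          · simp only [copy_s_inr] at hse
            exact hnone f.1 (embed_inl_inv hse).1
        · by_cases hab : a ∈ G.bsucc b
          · have havoid : ∀ z, G.embed b z ∉ (G.copyGraph b).bsucc (Sum.inl a) := by
              intro z hmem
              by_cases hz : z ∈ G.bsucc b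
              · rw [G.embed_of_mem hz] at hmem
                exact (csucc_lr.mp hmem).1 hab
              · rw [G.embed_of_not_mem hz] at hmem
                exact hz (hNest b a hb ha hab (csucc_ll.mp hmem))
            refine ⟨trivial, hv, ?_⟩
            rintro (e | f) - hse
            · exact (Sum.inl_ne_inr hse).elim
            · exact hmin (Sum.inr f) ⟨trivial, havoid _, havoid _⟩ hse
          · have hu : G.ty u.1 = .wire := hv
            have hua : u.1 ∉ G.bsucc a := fun h => hnb (csucc_lr.mpr ⟨hab, h⟩)
            have hnone : ∀ e, G.s e ≠ u.1 := by
              refine pat_key_out hG ha hu hua ?_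
              intro e hs ht
              refine hmin (Sum.inr ⟨e, Or.inl (by rw [hs]; exact u.2)⟩)
                ⟨trivial, fun h => hua (hs ▸ embed_csucc_inl h),
                  fun h => ht (embed_csucc_inl h)⟩ ?_
              show G.embed b (G.s e) = Sum.inr u
              rw [hs]; exact G.embed_of_mem u.2
            refine ⟨trivial, hv, ?_⟩
            rintro (e | f) - hse
            · exact (Sum.inl_ne_inr hse).elim
            · simp only [copy_s_inr] at hse
              exact hnone f.1 (embed_inr_inv hse)
    · have hw : G.ty w.1 = .bang := hxty
      have hsub : G.bsucc w.1 ⊆ G.bsucc b := hNest b w.1 hb hw w.2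
      have hinl_not : ∀ z : V, Sum.inl z ∉ (G.copyGraph b).bsucc (Sum.inr w) :=
        fun z h => (csucc_rl.mp h).2 (hsub (csucc_rl.mp h).1)
      constructor
      · rintro (v | u) ⟨⟨-, hnb⟩, hv, hmin⟩
        · have hv' : G.ty v = .wire := hv
          refine ⟨trivial, hv, ?_⟩
          rintro (e | f) - hte
          · exact hmin (Sum.inl e) ⟨trivial, hinl_not _, hinl_not _⟩ hte
          · simp only [copy_t_inr] at hte
            obtain ⟨htv, hvb⟩ := embed_inl_inv hte
            have hsf : G.s f.1 ∈ G.bsucc b := f.2.resolve_right (fun h => hvb (htv ▸ h))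
            simp only [copy_s_inr, copy_ty_embed]
            by_contra hns
            exact pat_L1 hG hb hv' (htv ▸ hvb) htv hsf hns
        · have hu : G.ty u.1 = .wire := hv
          have huw : u.1 ∉ G.bsucc w.1 := fun h => hnb (csucc_rr.mpr h)
          have hall : ∀ e, G.t e = u.1 → G.ty (G.s e) = .bang := by
            refine pat_key_in hG hw hu huw ?_
            intro e ht hs
            have hres := hmin (Sum.inr ⟨e, Or.inr (by rw [ht]; exact u.2)⟩)
              ⟨trivial, fun h => hs (embed_csucc_inr h),
                fun h => huw (ht ▸ embed_csucc_inr h)⟩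
              (by show G.embed b (G.t e) = Sum.inr u; rw [ht]; exact G.embed_of_mem u.2)
            simpa only [copy_s_inr, copy_ty_embed] using hres
          refine ⟨trivial, hv, ?_⟩
          rintro (e | f) - hte
          · exact (Sum.inl_ne_inr hte).elim
          · simp only [copy_t_inr] at hte
            simp only [copy_s_inr, copy_ty_embed]
            exact hall f.1 (embed_inr_inv hte)
      · rintro (v | u) ⟨⟨-, hnb⟩, hv, hmin⟩
        · have hv' : G.ty v = .wire := hv
          refine ⟨trivial, hv, ?_⟩
          rintro (e | f) - hse
          · exact hmin (Sum.inl e) ⟨trivial, hinl_not _, hinl_not _⟩ hse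
          · simp only [copy_s_inr] at hse
            obtain ⟨hsv, hvb⟩ := embed_inl_inv hse
            have htf : G.t f.1 ∈ G.bsucc b := f.2.resolve_left (fun h => hvb (hsv ▸ h))
            exact (pat_L2 hG hb hv' (hsv ▸ hvb) hsv htf).elim
        · have hu : G.ty u.1 = .wire := hv
          have huw : u.1 ∉ G.bsucc w.1 := fun h => hnb (csucc_rr.mpr h)
          have hnone : ∀ e, G.s e ≠ u.1 := by
            refine pat_key_out hG hw hu huw ?_
            intro e hs ht
            refine hmin (Sum.inr ⟨e, Or.inl (by rw [hs]; exact u.2)⟩)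
              ⟨trivial, fun h => huw (hs ▸ embed_csucc_inr h),
                fun h => ht (embed_csucc_inr h)⟩ ?_
            show G.embed b (G.s e) = Sum.inr u
            rw [hs]; exact G.embed_of_mem u.2
          refine ⟨trivial, hv, ?_⟩
          rintro (e | f) - hse
          · exact (Sum.inl_ne_inr hse).elim
          · simp only [copy_s_inr] at hse
            exact hnone f.1 (embed_inr_inv hse)
  · rintro (a | u) (c | w) hx hy hmem (z | t) hz
    · exact csucc_ll.mpr (hNest a c hx hy (csucc_ll.mp hmem) (csucc_ll.mp hz))
    · refine csucc_lr.mpr ⟨?_, hNest a c hx hy (csucc_ll.mp hmem) (csucc_lr.mp hz).2⟩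
      intro hab
      exact (csucc_lr.mp hz).1 (hNest b a hb hx hab (csucc_ll.mp hmem))
    · exact absurd (hNest b w.1 hb hy w.2 (csucc_rl.mp hz).1) (csucc_rl.mp hz).2
    · exact csucc_lr.mpr ⟨(csucc_lr.mp hmem).1,
        hNest a w.1 hx hy (csucc_lr.mp hmem).2 (csucc_rr.mp hz)⟩
    · exact absurd (hNest b u.1 hb hx u.2 (csucc_rl.mp hmem).1) (csucc_rl.mp hmem).2
    · exact absurd (hNest b u.1 hb hx u.2 (csucc_rl.mp hmem).1) (csucc_rl.mp hmem).2
    · exact absurd (hNest b w.1 hb hy w.2 (csucc_rl.mp hz).1) (csucc_rl.mp hz).2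
    · exact csucc_rr.mpr (hNest u.1 w.1 hx hy (csucc_rr.mp hmem) (csucc_rr.mp hz))

end TGraph

namespace TGraph

variable {V E : Type} {G : TGraph V E}

@[simp] lemma merge_s_mk (b b' : V) (e : E) :
    (G.mergeGraph b b').s (Quot.mk (G.mergeERel b b') e) =
      Quot.mk (mergeVRel b b') (G.s e) := rfl

@[simp] lemma merge_t_mk (b b' : V) (e : E) :
    (G.mergeGraph b b').t (Quot.mk (G.mergeERel b b') e) =
      Quot.mk (mergeVRel b b') (G.t e) := rfl

theorem merge_isPattern (hG : G.IsPattern) {b b' : V} (hb : G.ty b = .bang)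
    (hb' : G.ty b' = .bang) (hpred : G.bpred b \ {b} = G.bpred b' \ {b'})
    (hdisj : G.bsucc b ∩ G.bsucc b' = ∅) :
    (G.mergeGraph b b').IsPattern := by
  classical
  obtain ⟨⟨hNN, hG3⟩, ⟨-, hSig⟩, ⟨hBsimp, hBrefl, hBanti, hBtrans⟩, hOpen, hNest⟩ := id hG
  have hdisj' : ∀ z, z ∈ G.bsucc b → z ∈ G.bsucc b' → False := by
    intro z h1 h2
    have : z ∈ G.bsucc b ∩ G.bsucc b' := ⟨h1, h2⟩
    rw [hdisj] at this; exact this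
  have hbb : b ≠ b' := fun h => hdisj' b' (h ▸ hBrefl b' hb') (hBrefl b' hb')
  have hpb' : b' ∉ G.bpred b := by
    rintro ⟨e, hs, ht⟩
    exact hdisj' b (hBrefl b hb) ⟨e, hs, ht⟩
  have hpb : b ∉ G.bpred b' := by
    rintro ⟨e, hs, ht⟩
    exact hdisj' b' ⟨e, hs, ht⟩ (hBrefl b' hb')
  have predbang : ∀ {x}, x ∈ G.bpred b → G.ty x = .bang := by
    rintro x ⟨e, hs, ht⟩
    exact hs ▸ hG3 e (by rw [ht]; exact hb)
  have predbang' : ∀ {x}, x ∈ G.bpred b' → G.ty x = .bang := by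
    rintro x ⟨e, hs, ht⟩
    exact hs ▸ hG3 e (by rw [ht]; exact hb')
  have bpredb : b ∈ G.bpred b := by
    obtain ⟨e, hs, ht⟩ := hBrefl b hb; exact ⟨e, hs, ht⟩
  have bpredb' : b' ∈ G.bpred b' := by
    obtain ⟨e, hs, ht⟩ := hBrefl b' hb'; exact ⟨e, hs, ht⟩
  have vsymm : ∀ {u w}, mergeVRel b b' u w → mergeVRel b b' w u := by
    rintro u w (rfl | ⟨rfl, rfl⟩ | ⟨rfl, rfl⟩)
    · exact Or.inl rfl
    · exact Or.inr (Or.inr ⟨rfl, rfl⟩)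
    · exact Or.inr (Or.inl ⟨rfl, rfl⟩)
  have vtrans : ∀ {u v w}, mergeVRel b b' u v → mergeVRel b b' v w → mergeVRel b b' u w := by
    intro u v w h1 h2
    rcases h1 with rfl | ⟨g1, g2⟩ | ⟨g1, g2⟩
    · exact h2
    · rcases h2 with rfl | ⟨h1', h2'⟩ | ⟨h1', h2'⟩
      · exact Or.inr (Or.inl ⟨g1, g2⟩)
      · exact (hbb ((g2.symm.trans h1').symm)).elim
      · exact Or.inl (g1.trans h2'.symm)
    · rcases h2 with rfl | ⟨h1', h2'⟩ | ⟨h1', h2'⟩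
      · exact Or.inr (Or.inr ⟨g1, g2⟩)
      · exact Or.inl (g1.trans h2'.symm)
      · exact (hbb (g2.symm.trans h1')).elim
  have vne : ∀ {u w}, mergeVRel b b' u w → u ≠ b' → w ≠ b' → u = w := by
    rintro u w (rfl | ⟨rfl, rfl⟩ | ⟨rfl, rfl⟩) h1 h2
    · rfl
    · exact (h2 rfl).elim
    · exact (h1 rfl).elim
  have vne' : ∀ {u w}, mergeVRel b b' u w → u ≠ b → w ≠ b → u = w := by
    rintro u w (rfl | ⟨rfl, rfl⟩ | ⟨rfl, rfl⟩) h1 h2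
    · rfl
    · exact (h1 rfl).elim
    · exact (h2 rfl).elim
  have exactV : ∀ {v₁ v₂ : V}, Quot.mk (mergeVRel b b') v₁ = Quot.mk (mergeVRel b b') v₂ →
      mergeVRel b b' v₁ v₂ := by
    intro v₁ v₂ h
    have hresp : ∀ u w, mergeVRel b b' u w →
        (if u = b' then b else u) = (if w = b' then b else w) := by
      rintro u w (rfl | ⟨rfl, rfl⟩ | ⟨rfl, rfl⟩)
      · rfl
      · rw [if_neg hbb, if_pos rfl]
      · rw [if_neg hbb, if_pos rfl]
    have hq : (if v₁ = b' then b else v₁) = (if v₂ = b' then b else v₂) :=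
      congrArg (Quot.lift (fun v => if v = b' then b else v) hresp) h
    by_cases h₁ : v₁ = b'
    · by_cases h₂ : v₂ = b'
      · exact Or.inl (h₁.trans h₂.symm)
      · rw [if_pos h₁, if_neg h₂] at hq
        exact Or.inr (Or.inr ⟨h₁, hq.symm⟩)
    · by_cases h₂ : v₂ = b'
      · rw [if_neg h₁, if_pos h₂] at hq
        exact Or.inr (Or.inl ⟨hq, h₂⟩)
      · rw [if_neg h₁, if_neg h₂] at hq
        exact Or.inl hq
  have upbeta : ∀ {e}, e ∈ G.upEdges b → e ∈ G.betaEdges :=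
    fun h => ⟨predbang h.1, predbang h.2⟩
  have upbeta' : ∀ {e}, e ∈ G.upEdges b' → e ∈ G.betaEdges :=
    fun h => ⟨predbang' h.1, predbang' h.2⟩
  have equivE : Equivalence (G.mergeERel b b') := by
    refine ⟨fun e => Or.inl rfl, ?_, ?_⟩
    · rintro e₁ e₂ (rfl | ⟨m1, m2, q1, q2⟩ | ⟨m1, m2, q1, q2⟩)
      · exact Or.inl rfl
      · exact Or.inr (Or.inr ⟨m2, m1, q1.symm, q2.symm⟩)
      · exact Or.inr (Or.inl ⟨m2, m1, q1.symm, q2.symm⟩)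
    · rintro e₁ e₂ e₃ (rfl | ⟨m1, m2, q1, q2⟩ | ⟨m1, m2, q1, q2⟩) h23
      · exact h23
      · rcases h23 with rfl | ⟨n1, n2, r1, r2⟩ | ⟨n1, n2, r1, r2⟩
        · exact Or.inr (Or.inl ⟨m1, m2, q1, q2⟩)
        · exact Or.inr (Or.inl ⟨m1, n2, q1.trans r1, q2.trans r2⟩)
        · refine Or.inl ?_
          have hseq : G.s e₁ = G.s e₃ :=
            vne (exactV (q1.trans r1)) (fun h => hpb' (h ▸ m1.1)) (fun h => hpb' (h ▸ n2.1))
          have hteq : G.t e₁ = G.t e₃ :=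
            vne (exactV (q2.trans r2)) (fun h => hpb' (h ▸ m1.2)) (fun h => hpb' (h ▸ n2.2))
          exact hBsimp e₁ e₃ (upbeta m1) (upbeta n2) hseq hteq
      · rcases h23 with rfl | ⟨n1, n2, r1, r2⟩ | ⟨n1, n2, r1, r2⟩
        · exact Or.inr (Or.inr ⟨m1, m2, q1, q2⟩)
        · refine Or.inl ?_
          have hseq : G.s e₁ = G.s e₃ :=
            vne' (exactV (q1.trans r1)) (fun h => hpb (h ▸ m1.1)) (fun h => hpb (h ▸ n2.1))
          have hteq : G.t e₁ = G.t e₃ :=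
            vne' (exactV (q2.trans r2)) (fun h => hpb (h ▸ m1.2)) (fun h => hpb (h ▸ n2.2))
          exact hBsimp e₁ e₃ (upbeta' m1) (upbeta' n2) hseq hteq
        · exact Or.inr (Or.inr ⟨m1, n2, q1.trans r1, q2.trans r2⟩)
  have exactE : ∀ {e₁ e₂ : E}, Quot.mk (G.mergeERel b b') e₁ = Quot.mk (G.mergeERel b b') e₂ →
      G.mergeERel b b' e₁ e₂ :=
    fun h => (Equivalence.eqvGen_iff equivE).mp (Quot.eqvGen_exact h)
  have mty : ∀ v, (G.mergeGraph b b').ty (Quot.mk (mergeVRel b b') v) = G.ty v := by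
    intro v
    rw [mergeGraph_ty_mk]
    split
    · next h => rw [h, hb, hb']
    · rfl
  have tover : ∀ (e : E) (v : V), v ≠ b' → v ≠ b →
      (G.mergeGraph b b').t (Quot.mk (G.mergeERel b b') e) = Quot.mk (mergeVRel b b') v →
      G.t e = v := by
    intro e v hn' hn h
    rcases exactV h with h | ⟨h1, h2⟩ | ⟨h1, h2⟩
    · exact h
    · exact absurd h2 hn'
    · exact absurd h2 hn
  have sover : ∀ (e : E) (v : V), v ≠ b' → v ≠ b →
      (G.mergeGraph b b').s (Quot.mk (G.mergeERel b b') e) = Quot.mk (mergeVRel b b') v →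
      G.s e = v := by
    intro e v hn' hn h
    rcases exactV h with h | ⟨h1, h2⟩ | ⟨h1, h2⟩
    · exact h
    · exact absurd h2 hn'
    · exact absurd h2 hn
  have msucc : ∀ a w : V,
      (Quot.mk (mergeVRel b b') w ∈ (G.mergeGraph b b').bsucc (Quot.mk (mergeVRel b b') a)) ↔
      ∃ a' w', mergeVRel b b' a' a ∧ mergeVRel b b' w' w ∧ w' ∈ G.bsucc a' := by
    intro a w
    constructor
    · rintro ⟨eq, hs, ht⟩
      obtain ⟨e, rfl⟩ := Quot.exists_rep eq
      exact ⟨G.s e, G.t e, exactV hs, exactV ht, e, rfl, rfl⟩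
    · rintro ⟨a', w', ha', hw', e, hs, ht⟩
      refine ⟨Quot.mk _ e, ?_, ?_⟩
      · rw [merge_s_mk, hs]; exact Quot.sound ha'
      · rw [merge_t_mk, ht]; exact Quot.sound hw'
  have msucc_mem : ∀ a w : V, w ∈ G.bsucc a →
      Quot.mk (mergeVRel b b') w ∈ (G.mergeGraph b b').bsucc (Quot.mk (mergeVRel b b') a) :=
    fun a w h => (msucc a w).mpr ⟨a, w, Or.inl rfl, Or.inl rfl, h⟩
  have tyrel : ∀ {u w}, mergeVRel b b' u w → G.ty u = G.ty w := by
    rintro u w (rfl | ⟨rfl, rfl⟩ | ⟨rfl, rfl⟩)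
    · rfl
    · rw [hb, hb']
    · rw [hb, hb']
  have chain : ∀ x₁ y₁ y₂ z : V, mergeVRel b b' y₁ y₂ → G.ty x₁ = .bang →
      G.ty y₂ = .bang → y₁ ∈ G.bsucc x₁ → z ∈ G.bsucc y₂ →
      ∃ x', mergeVRel b b' x' x₁ ∧ z ∈ G.bsucc x' := by
    intro x₁ y₁ y₂ z rel hx₁ hy₂ m1 m2
    rcases rel with rfl | ⟨h1, h2⟩ | ⟨h1, h2⟩
    · exact ⟨x₁, Or.inl rfl, hNest x₁ y₁ hx₁ hy₂ m1 m2⟩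
    · by_cases hx₁b : x₁ = b
      · exact ⟨b', Or.inr (Or.inr ⟨rfl, hx₁b⟩), h2 ▸ m2⟩
      · have hx₁p : x₁ ∈ G.bpred b := by
          obtain ⟨e, hs, ht⟩ := m1; exact ⟨e, hs, ht.trans h1⟩
        have hmem : x₁ ∈ G.bpred b' \ {b'} := hpred ▸ ⟨hx₁p, hx₁b⟩
        obtain ⟨e, hs, ht⟩ := hmem.1
        exact ⟨x₁, Or.inl rfl, hNest x₁ b' hx₁ hb' ⟨e, hs, ht⟩ (h2 ▸ m2)⟩
    · by_cases hx₁b : x₁ = b'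
      · exact ⟨b, Or.inr (Or.inl ⟨rfl, hx₁b⟩), h2 ▸ m2⟩
      · have hx₁p : x₁ ∈ G.bpred b' := by
          obtain ⟨e, hs, ht⟩ := m1; exact ⟨e, hs, ht.trans h1⟩
        have hmem : x₁ ∈ G.bpred b \ {b} := hpred.symm ▸ ⟨hx₁p, hx₁b⟩
        obtain ⟨e, hs, ht⟩ := hmem.1
        exact ⟨x₁, Or.inl rfl, hNest x₁ b hx₁ hb ⟨e, hs, ht⟩ (h2 ▸ m2)⟩
  have fix : ∀ {u w : V}, mergeVRel b b' u w → ¬(w = b ∨ w = b') → u = w := by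
    rintro u w (h | ⟨h1', h2'⟩ | ⟨h1', h2'⟩) hw
    · exact h
    · exact absurd (Or.inr h2') hw
    · exact absurd (Or.inl h2') hw
  have mem2 : ∀ {u w : V}, mergeVRel b b' u w → (w = b ∨ w = b') → u = b ∨ u = b' := by
    rintro u w (h | ⟨h1', h2'⟩ | ⟨h1', h2'⟩) hw
    · exact h.symm ▸ hw
    · exact Or.inl h1'
    · exact Or.inr h1'
  have four : ∀ y, G.ty y = .bang → (y ∈ G.bsucc b ∨ y ∈ G.bsucc b') →
      (b ∈ G.bsucc y ∨ b' ∈ G.bsucc y) → y = b ∨ y = b' := by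
    intro y hy hin hout
    rcases hin with h1 | h1 <;> rcases hout with h2 | h2
    · exact Or.inl (hBanti b y hb hy h1 h2).symm
    · exact (hdisj' b' (hBtrans b y b' hb hy hb' h1 h2) (hBrefl b' hb')).elim
    · exact (hdisj' b (hBrefl b hb) (hBtrans b' y b hb' hy hb h1 h2)).elim
    · exact Or.inr (hBanti b' y hb' hy h1 h2).symm
  refine ⟨⟨?_, ?_⟩, ⟨?_, ?_⟩, ⟨?_, ?_, ?_, ?_⟩, ?_, ?_⟩
  · refine Quot.ind fun e => ?_
    intro h
    rw [merge_s_mk, merge_t_mk] at h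
    simp only [mty] at h
    exact hNN e h
  · refine Quot.ind fun e => ?_
    intro h
    rw [merge_t_mk] at h
    rw [mty] at h
    rw [merge_s_mk]
    rw [mty]
    exact hG3 e h
  · refine Quot.ind fun e => ?_
    intro h
    rw [merge_s_mk, merge_t_mk] at h
    simp only [mty] at h
    exact hNN e h
  · refine Quot.ind fun v => ?_
    intro hv
    have hvw : G.ty v = .wire := by rwa [mty] at hv
    have hvb : v ≠ b := fun h => by rw [h, hb] at hvw; exact VTy.noConfusion hvw
    have hvb' : v ≠ b' := fun h => by rw [h, hb'] at hvw; exact VTy.noConfusion hvw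
    constructor
    · refine Quot.ind fun e₁ => Quot.ind fun e₂ => ?_
      intro h₁ h₂ ht₁ ht₂
      have s₁ : e₁ ∈ G.sigmaEdges := by
        simp only [sigmaEdges, Set.mem_setOf_eq] at h₁ ⊢
        rw [merge_s_mk, merge_t_mk] at h₁
        simp only [mty] at h₁
        exact h₁
      have s₂ : e₂ ∈ G.sigmaEdges := by
        simp only [sigmaEdges, Set.mem_setOf_eq] at h₂ ⊢
        rw [merge_s_mk, merge_t_mk] at h₂
        simp only [mty] at h₂
        exact h₂
      exact congrArg (Quot.mk _) ((hSig v hvw).1 e₁ e₂ s₁ s₂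
        (tover e₁ v hvb' hvb ht₁) (tover e₂ v hvb' hvb ht₂))
    · refine Quot.ind fun e₁ => Quot.ind fun e₂ => ?_
      intro h₁ h₂ hs₁ hs₂
      have s₁ : e₁ ∈ G.sigmaEdges := by
        simp only [sigmaEdges, Set.mem_setOf_eq] at h₁ ⊢
        rw [merge_s_mk, merge_t_mk] at h₁
        simp only [mty] at h₁
        exact h₁
      have s₂ : e₂ ∈ G.sigmaEdges := by
        simp only [sigmaEdges, Set.mem_setOf_eq] at h₂ ⊢
        rw [merge_s_mk, merge_t_mk] at h₂
        simp only [mty] at h₂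
        exact h₂
      exact congrArg (Quot.mk _) ((hSig v hvw).2 e₁ e₂ s₁ s₂
        (sover e₁ v hvb' hvb hs₁) (sover e₂ v hvb' hvb hs₂))
  · refine Quot.ind fun f₁ => Quot.ind fun f₂ => ?_
    intro h₁ h₂ hs ht
    have hβ₁ : f₁ ∈ G.betaEdges := by
      simp only [betaEdges, Set.mem_setOf_eq] at h₁ ⊢
      rw [merge_s_mk, merge_t_mk] at h₁
      simp only [mty] at h₁
      exact h₁
    have hβ₂ : f₂ ∈ G.betaEdges := by
      simp only [betaEdges, Set.mem_setOf_eq] at h₂ ⊢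
      rw [merge_s_mk, merge_t_mk] at h₂
      simp only [mty] at h₂
      exact h₂
    have qs : mergeVRel b b' (G.s f₁) (G.s f₂) := exactV hs
    have qt : mergeVRel b b' (G.t f₁) (G.t f₂) := exactV ht
    have contra : ∀ z, z ∈ G.bsucc b → z ∈ G.bsucc b' →
        Quot.mk (G.mergeERel b b') f₁ = Quot.mk (G.mergeERel b b') f₂ :=
      fun z p q => (hdisj' z p q).elim
    rcases qs with hse | ⟨hs1, hs2⟩ | ⟨hs1, hs2⟩
    · rcases qt with hte | ⟨ht1, ht2⟩ | ⟨ht1, ht2⟩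
      · exact congrArg (Quot.mk _) (hBsimp f₁ f₂ hβ₁ hβ₂ hse hte)
      · exact Quot.sound (Or.inr (Or.inl ⟨⟨⟨f₁, rfl, ht1⟩, by rw [ht1]; exact bpredb⟩,
          ⟨⟨f₂, rfl, ht2⟩, by rw [ht2]; exact bpredb'⟩, hs, ht⟩))
      · exact Quot.sound (Or.inr (Or.inr ⟨⟨⟨f₁, rfl, ht1⟩, by rw [ht1]; exact bpredb'⟩,
          ⟨⟨f₂, rfl, ht2⟩, by rw [ht2]; exact bpredb⟩, hs, ht⟩))
    · rcases qt with hte | ⟨ht1, ht2⟩ | ⟨ht1, ht2⟩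
      · exact contra (G.t f₁) ⟨f₁, hs1, rfl⟩ ⟨f₂, hs2, hte.symm⟩
      · exact Quot.sound (Or.inr (Or.inl ⟨⟨by rw [hs1]; exact bpredb, by rw [ht1]; exact bpredb⟩,
          ⟨by rw [hs2]; exact bpredb', by rw [ht2]; exact bpredb'⟩, hs, ht⟩))
      · exact contra b' ⟨f₁, hs1, ht1⟩ (hBrefl b' hb')
    · rcases qt with hte | ⟨ht1, ht2⟩ | ⟨ht1, ht2⟩
      · exact contra (G.t f₁) ⟨f₂, hs2, hte.symm⟩ ⟨f₁, hs1, rfl⟩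
      · exact contra b (hBrefl b hb) ⟨f₁, hs1, ht1⟩
      · exact Quot.sound (Or.inr (Or.inr ⟨⟨by rw [hs1]; exact bpredb', by rw [ht1]; exact bpredb'⟩,
          ⟨by rw [hs2]; exact bpredb, by rw [ht2]; exact bpredb⟩, hs, ht⟩))
  · refine Quot.ind fun v => ?_
    intro hv
    exact msucc_mem v v (hBrefl v (by rwa [mty] at hv))
  · refine Quot.ind fun x => Quot.ind fun y => ?_
    intro hx' hy' h1 h2
    have hx : G.ty x = .bang := by rwa [mty] at hx'
    have hy : G.ty y = .bang := by rwa [mty] at hy'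
    have qbb' : Quot.mk (mergeVRel b b') b = Quot.mk (mergeVRel b b') b' :=
      Quot.sound (Or.inr (Or.inl ⟨rfl, rfl⟩))
    obtain ⟨x₁, y₁, rx₁, ry₁, m1⟩ := (msucc x y).mp h1
    obtain ⟨y₂, x₂, ry₂, rx₂, m2⟩ := (msucc y x).mp h2
    by_cases hxm : x = b ∨ x = b'
    · by_cases hym : y = b ∨ y = b'
      · rcases hxm with h | h <;> rcases hym with h' | h' <;> rw [h, h']
        · exact qbb'
        · exact qbb'.symm
      · exfalso
        have hy1 : y₁ = y := fix ry₁ hym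
        have hy2 : y₂ = y := fix ry₂ hym
        have hx1 := mem2 rx₁ hxm
        have hx2 := mem2 rx₂ hxm
        have hin : y ∈ G.bsucc b ∨ y ∈ G.bsucc b' := by
          rcases hx1 with h | h
          · exact Or.inl (h ▸ hy1 ▸ m1)
          · exact Or.inr (h ▸ hy1 ▸ m1)
        have hout : b ∈ G.bsucc y ∨ b' ∈ G.bsucc y := by
          rcases hx2 with h | h
          · exact Or.inl (h ▸ hy2 ▸ m2)
          · exact Or.inr (h ▸ hy2 ▸ m2)
        exact hym (four y hy hin hout)
    · by_cases hym : y = b ∨ y = b'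
      · exfalso
        have hx1 : x₁ = x := fix rx₁ hxm
        have hx2 : x₂ = x := fix rx₂ hxm
        have hy1 := mem2 ry₁ hym
        have hy2 := mem2 ry₂ hym
        have hout : b ∈ G.bsucc x ∨ b' ∈ G.bsucc x := by
          rcases hy1 with h | h
          · exact Or.inl (h ▸ hx1 ▸ m1)
          · exact Or.inr (h ▸ hx1 ▸ m1)
        have hin : x ∈ G.bsucc b ∨ x ∈ G.bsucc b' := by
          rcases hy2 with h | h
          · exact Or.inl (h ▸ hx2 ▸ m2)
          · exact Or.inr (h ▸ hx2 ▸ m2)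
        exact hxm (four x hx hin hout)
      · have hx1 : x₁ = x := fix rx₁ hxm
        have hx2 : x₂ = x := fix rx₂ hxm
        have hy1 : y₁ = y := fix ry₁ hym
        have hy2 : y₂ = y := fix ry₂ hym
        exact congrArg (Quot.mk _) (hBanti x y hx hy (hx1 ▸ hy1 ▸ m1) (hy2 ▸ hx2 ▸ m2))
  · refine Quot.ind fun x => Quot.ind fun y => Quot.ind fun z => ?_
    intro hx' hy' hz' h1 h2
    have hx : G.ty x = .bang := by rwa [mty] at hx'
    obtain ⟨x₁, y₁, rx₁, ry₁, m1⟩ := (msucc x y).mp h1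
    obtain ⟨y₂, z₂, ry₂, rz₂, m2⟩ := (msucc y z).mp h2
    have hy₂ : G.ty y₂ = .bang := (tyrel ry₂).trans (by rwa [mty] at hy')
    have hx₁ : G.ty x₁ = .bang := (tyrel rx₁).trans hx
    obtain ⟨x', rx', hm⟩ := chain x₁ y₁ y₂ z₂ (vtrans ry₁ (vsymm ry₂)) hx₁ hy₂ m1 m2
    exact (msucc x z).mpr ⟨x', z₂, vtrans rx' rx₁, rz₂, hm⟩
  · refine Quot.ind fun a => ?_
    intro ha'
    have ha : G.ty a = .bang := by rwa [mty] at ha'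
    by_cases ham : a = b ∨ a = b'
    · have memU : ∀ w : V, (Quot.mk (mergeVRel b b') w ∈
          (G.mergeGraph b b').bsucc (Quot.mk (mergeVRel b b') a)) ↔
          ∃ w', mergeVRel b b' w' w ∧ (w' ∈ G.bsucc b ∨ w' ∈ G.bsucc b') := by
        intro w
        rw [msucc]
        constructor
        · rintro ⟨a', w', ra, rw', hm⟩
          refine ⟨w', rw', ?_⟩
          rcases mem2 ra ham with h | h
          · exact Or.inl (h ▸ hm)
          · exact Or.inr (h ▸ hm)
        · rintro ⟨w', rw', (hm | hm)⟩
          · refine ⟨b, w', ?_, rw', hm⟩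
            rcases ham with h | h
            · exact Or.inl h.symm
            · exact Or.inr (Or.inl ⟨rfl, h⟩)
          · refine ⟨b', w', ?_, rw', hm⟩
            rcases ham with h | h
            · exact Or.inr (Or.inr ⟨rfl, h⟩)
            · exact Or.inl h.symm
      constructor
      · intro vq hIn
        obtain ⟨v, rfl⟩ := Quot.exists_rep vq
        obtain ⟨⟨-, hnb⟩, hvt, hmin⟩ := hIn
        have hvw : G.ty v = .wire := by have := hvt; rwa [mty] at this
        have hvb : v ≠ b := fun h => by rw [h, hb] at hvw; exact VTy.noConfusion hvw
        have hvb' : v ≠ b' := fun h => by rw [h, hb'] at hvw; exact VTy.noConfusion hvw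
        have hnbU : v ∉ G.bsucc b ∧ v ∉ G.bsucc b' :=
          ⟨fun h => hnb ((memU v).mpr ⟨v, Or.inl rfl, Or.inl h⟩),
           fun h => hnb ((memU v).mpr ⟨v, Or.inl rfl, Or.inr h⟩)⟩
        have hall : ∀ e, G.t e = v → G.ty (G.s e) = .bang := by
          intro e ht
          by_contra hns
          have hsb : G.s e ≠ b := fun h => hns (by rw [h]; exact hb)
          have hsb' : G.s e ≠ b' := fun h => hns (by rw [h]; exact hb')
          have hsU : G.s e ∈ G.bsucc b ∨ G.s e ∈ G.bsucc b' := by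
            by_contra hU
            push_neg at hU
            have av1 : Quot.mk (mergeVRel b b') (G.s e) ∉
                (G.mergeGraph b b').bsucc (Quot.mk (mergeVRel b b') a) := by
              intro hmem
              obtain ⟨w', rw', hw'⟩ := (memU (G.s e)).mp hmem
              have hw : w' = G.s e := fix rw' (by rintro (h | h); exacts [hsb h, hsb' h])
              rcases hw' with h | h
              · exact hU.1 (hw ▸ h)
              · exact hU.2 (hw ▸ h)
            have av2 : Quot.mk (mergeVRel b b') (G.t e) ∉
                (G.mergeGraph b b').bsucc (Quot.mk (mergeVRel b b') a) := by
              intro hmem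
              obtain ⟨w', rw', hw'⟩ := (memU (G.t e)).mp hmem
              have hw : w' = G.t e := fix rw' (by rw [ht]; rintro (h | h); exacts [hvb h, hvb' h])
              rcases hw' with h | h
              · exact hnbU.1 (ht ▸ hw ▸ h)
              · exact hnbU.2 (ht ▸ hw ▸ h)
            have hres := hmin (Quot.mk _ e) ⟨trivial, av1, av2⟩ (by rw [merge_t_mk, ht])
            rw [merge_s_mk] at hres
            rw [mty] at hres
            exact hns hres
          rcases hsU with h | h
          · exact pat_L1 hG hb hvw hnbU.1 ht h hns
          · exact pat_L1 hG hb' hvw hnbU.2 ht h hns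
        refine ⟨trivial, hvt, ?_⟩
        refine Quot.ind fun e => ?_
        intro _ hte
        rw [merge_s_mk]
        rw [mty]
        exact hall e (tover e v hvb' hvb hte)
      · intro vq hOut
        obtain ⟨v, rfl⟩ := Quot.exists_rep vq
        obtain ⟨⟨-, hnb⟩, hvt, hmin⟩ := hOut
        have hvw : G.ty v = .wire := by have := hvt; rwa [mty] at this
        have hvb : v ≠ b := fun h => by rw [h, hb] at hvw; exact VTy.noConfusion hvw
        have hvb' : v ≠ b' := fun h => by rw [h, hb'] at hvw; exact VTy.noConfusion hvw
        have hnbU : v ∉ G.bsucc b ∧ v ∉ G.bsucc b' :=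
          ⟨fun h => hnb ((memU v).mpr ⟨v, Or.inl rfl, Or.inl h⟩),
           fun h => hnb ((memU v).mpr ⟨v, Or.inl rfl, Or.inr h⟩)⟩
        have hnone : ∀ e, G.s e ≠ v := by
          intro e hs
          have hnt : G.ty (G.t e) ≠ .bang := fun h => by
            have := hG3 e h; rw [hs, hvw] at this; exact VTy.noConfusion this
          have htb : G.t e ≠ b := fun h => hnt (by rw [h]; exact hb)
          have htb' : G.t e ≠ b' := fun h => hnt (by rw [h]; exact hb')
          have hU : G.t e ∈ G.bsucc b ∨ G.t e ∈ G.bsucc b' := by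
            by_contra hU
            push_neg at hU
            have av1 : Quot.mk (mergeVRel b b') (G.s e) ∉
                (G.mergeGraph b b').bsucc (Quot.mk (mergeVRel b b') a) := by
              intro hmem
              obtain ⟨w', rw', hw'⟩ := (memU (G.s e)).mp hmem
              have hw : w' = G.s e := fix rw' (by rw [hs]; rintro (h | h); exacts [hvb h, hvb' h])
              rcases hw' with h | h
              · exact hnbU.1 (hs ▸ hw ▸ h)
              · exact hnbU.2 (hs ▸ hw ▸ h)
            have av2 : Quot.mk (mergeVRel b b') (G.t e) ∉
                (G.mergeGraph b b').bsucc (Quot.mk (mergeVRel b b') a) := by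
              intro hmem
              obtain ⟨w', rw', hw'⟩ := (memU (G.t e)).mp hmem
              have hw : w' = G.t e := fix rw' (by rintro (h | h); exacts [htb h, htb' h])
              rcases hw' with h | h
              · exact hU.1 (hw ▸ h)
              · exact hU.2 (hw ▸ h)
            exact hmin (Quot.mk _ e) ⟨trivial, av1, av2⟩ (by rw [merge_s_mk, hs])
          rcases hU with h | h
          · exact pat_L2 hG hb hvw hnbU.1 hs h
          · exact pat_L2 hG hb' hvw hnbU.2 hs h
        refine ⟨trivial, hvt, ?_⟩
        refine Quot.ind fun e => ?_
        intro _ hse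
        exact hnone e (sover e v hvb' hvb hse)
    · push_neg at ham
      have memA : ∀ w : V, (Quot.mk (mergeVRel b b') w ∈
          (G.mergeGraph b b').bsucc (Quot.mk (mergeVRel b b') a)) ↔
          ∃ w', mergeVRel b b' w' w ∧ w' ∈ G.bsucc a := by
        intro w
        rw [msucc]
        constructor
        · rintro ⟨a', w', ra, rw', hm⟩
          have haa : a' = a := fix ra (by rintro (h | h); exacts [ham.1 h, ham.2 h])
          exact ⟨w', rw', haa ▸ hm⟩
        · rintro ⟨w', rw', hm⟩
          exact ⟨a, w', Or.inl rfl, rw', hm⟩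
      constructor
      · intro vq hIn
        obtain ⟨v, rfl⟩ := Quot.exists_rep vq
        obtain ⟨⟨-, hnb⟩, hvt, hmin⟩ := hIn
        have hvw : G.ty v = .wire := by have := hvt; rwa [mty] at this
        have hvb : v ≠ b := fun h => by rw [h, hb] at hvw; exact VTy.noConfusion hvw
        have hvb' : v ≠ b' := fun h => by rw [h, hb'] at hvw; exact VTy.noConfusion hvw
        have hva : v ∉ G.bsucc a := fun h => hnb ((memA v).mpr ⟨v, Or.inl rfl, h⟩)
        have hall : ∀ e, G.t e = v → G.ty (G.s e) = .bang := by
          refine pat_key_in hG ha hvw hva ?_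
          intro e ht hs
          by_cases hsb : G.s e = b
          · rw [hsb]; exact hb
          by_cases hsb' : G.s e = b'
          · rw [hsb']; exact hb'
          have av1 : Quot.mk (mergeVRel b b') (G.s e) ∉
              (G.mergeGraph b b').bsucc (Quot.mk (mergeVRel b b') a) := by
            intro hmem
            obtain ⟨w', rw', hm⟩ := (memA (G.s e)).mp hmem
            have hw : w' = G.s e := fix rw' (by rintro (h | h); exacts [hsb h, hsb' h])
            exact hs (hw ▸ hm)
          have av2 : Quot.mk (mergeVRel b b') (G.t e) ∉
              (G.mergeGraph b b').bsucc (Quot.mk (mergeVRel b b') a) := by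
            intro hmem
            obtain ⟨w', rw', hm⟩ := (memA (G.t e)).mp hmem
            have hw : w' = G.t e := fix rw' (by rw [ht]; rintro (h | h); exacts [hvb h, hvb' h])
            exact hva (ht ▸ hw ▸ hm)
          have hres := hmin (Quot.mk _ e) ⟨trivial, av1, av2⟩ (by rw [merge_t_mk, ht])
          rw [merge_s_mk] at hres
          rw [mty] at hres
          exact hres
        refine ⟨trivial, hvt, ?_⟩
        refine Quot.ind fun e => ?_
        intro _ hte
        rw [merge_s_mk]
        rw [mty]
        exact hall e (tover e v hvb' hvb hte)
      · intro vq hOut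
        obtain ⟨v, rfl⟩ := Quot.exists_rep vq
        obtain ⟨⟨-, hnb⟩, hvt, hmin⟩ := hOut
        have hvw : G.ty v = .wire := by have := hvt; rwa [mty] at this
        have hvb : v ≠ b := fun h => by rw [h, hb] at hvw; exact VTy.noConfusion hvw
        have hvb' : v ≠ b' := fun h => by rw [h, hb'] at hvw; exact VTy.noConfusion hvw
        have hva : v ∉ G.bsucc a := fun h => hnb ((memA v).mpr ⟨v, Or.inl rfl, h⟩)
        have hnone : ∀ e, G.s e ≠ v := by
          refine pat_key_out hG ha hvw hva ?_
          intro e hs ht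
          by_cases htb : G.t e = b
          · have := hG3 e (by rw [htb]; exact hb)
            rw [hs, hvw] at this; exact VTy.noConfusion this
          by_cases htb' : G.t e = b'
          · have := hG3 e (by rw [htb']; exact hb')
            rw [hs, hvw] at this; exact VTy.noConfusion this
          have av1 : Quot.mk (mergeVRel b b') (G.s e) ∉
              (G.mergeGraph b b').bsucc (Quot.mk (mergeVRel b b') a) := by
            intro hmem
            obtain ⟨w', rw', hm⟩ := (memA (G.s e)).mp hmem
            have hw : w' = G.s e := fix rw' (by rw [hs]; rintro (h | h); exacts [hvb h, hvb' h])
            exact hva (hs ▸ hw ▸ hm)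
          have av2 : Quot.mk (mergeVRel b b') (G.t e) ∉
              (G.mergeGraph b b').bsucc (Quot.mk (mergeVRel b b') a) := by
            intro hmem
            obtain ⟨w', rw', hm⟩ := (memA (G.t e)).mp hmem
            have hw : w' = G.t e := fix rw' (by rintro (h | h); exacts [htb h, htb' h])
            exact ht (hw ▸ hm)
          exact hmin (Quot.mk _ e) ⟨trivial, av1, av2⟩ (by rw [merge_s_mk, hs])
        refine ⟨trivial, hvt, ?_⟩
        refine Quot.ind fun e => ?_
        intro _ hse
        exact hnone e (sover e v hvb' hvb hse)
  · refine Quot.ind fun x => Quot.ind fun y => ?_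
    intro hx' hy' hmem wq hw
    obtain ⟨w, rfl⟩ := Quot.exists_rep wq
    have hx : G.ty x = .bang := by rwa [mty] at hx'
    have hy : G.ty y = .bang := by rwa [mty] at hy'
    obtain ⟨x₁, y₁, rx₁, ry₁, m1⟩ := (msucc x y).mp hmem
    obtain ⟨y₂, w₂, ry₂, rw₂, m2⟩ := (msucc y w).mp hw
    obtain ⟨x', rx', hm⟩ := chain x₁ y₁ y₂ w₂ (vtrans ry₁ (vsymm ry₂))
      ((tyrel rx₁).trans hx) ((tyrel ry₂).trans hy) m1 m2
    exact (msucc x w).mpr ⟨x', w₂, vtrans rx' rx₁, rw₂, hm⟩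

end TGraph

/-- For a pattern graph `G` and a `!`-vertex `b` of `G`,
`COPY_b(G)`, `DROP_b(G)` and `KILL_b(G)` are pattern graphs; and if moreover
`b'` is a `!`-vertex with `B↑(b)∖b = B↑(b')∖b'` and `B(b) ∩ B(b') = ∅`, then
`MERGE_{b,b'}(G)` is a pattern graph. -/
theorem statement_7 {V E : Type} {G : TGraph V E} (hG : G.IsPattern)
    (b : V) (hb : G.ty b = .bang) :
    (G.copyGraph b).IsPattern ∧
    (G.dropGraph b).IsPattern ∧
    (G.killGraph b).IsPattern ∧
    (∀ b' : V, G.ty b' = .bang →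
      G.bpred b \ {b} = G.bpred b' \ {b'} →
      G.bsucc b ∩ G.bsucc b' = ∅ →
      (G.mergeGraph b b').IsPattern) := by
  exact ⟨TGraph.copy_isPattern hG hb, TGraph.drop_isPattern hG hb,
    TGraph.kill_isPattern hG hb,
    fun b' hb' hpred hdisj => TGraph.merge_isPattern hG hb hb' hpred hdisj⟩
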